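/- Let F : C → D and G : D → C be functors and η : 𝟭_C → G∘F, ε : F∘G → 𝟭_D natural transformations. The following are equivalent: (1) η and ε satisfy the triangle identities Gε ∘ᵥ ηG = id_G and εF ∘ᵥ Fη = id_F (so that F is left adjoint to G with unit η and counit ε); (2) F is a terminal object in the rewrite category on the alternating words F(GF)ⁿ, and G is a terminal object in the rewrite category on the alternating words G(FG)ⁿ; that is, for every n ≥ 0 there exists an (η,ε)-derivation F(GF)ⁿ → F and any two such derivations are equal, and for every n ≥ 0 there exists an (η,ε)-derivation G(FG)ⁿ → G and any two such derivations are equal. -/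

import Mathlib

open CategoryTheory

namespace AdjRewrite

universe v₁ v₂ u₁ u₂
variable {C : Type u₁} [Category.{v₁} C] {D : Type u₂} [Category.{v₂} D]

/-- `powC F G n` is the alternating composite `(GF)ⁿ : C ⥤ C` (note `F ⋙ G` applies
`F` first, so it is the classical `G∘F`). -/
def powC (F : C ⥤ D) (G : D ⥤ C) : ℕ → (C ⥤ C)
  | 0 => 𝟭 C
  | n + 1 => powC F G n ⋙ (F ⋙ G)

/-- `powD F G n` is the alternating composite `(FG)ⁿ : D ⥤ D`. -/
def powD (F : C ⥤ D) (G : D ⥤ C) : ℕ → (D ⥤ D)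
  | 0 => 𝟭 D
  | n + 1 => powD F G n ⋙ (G ⋙ F)

/-- `aF F G n` is the alternating composite `F(GF)ⁿ : C ⥤ D`. -/
def aF (F : C ⥤ D) (G : D ⥤ C) (n : ℕ) : C ⥤ D := powC F G n ⋙ F

/-- `aG F G n` is the alternating composite `G(FG)ⁿ : D ⥤ C`. -/
def aG (F : C ⥤ D) (G : D ⥤ C) (n : ℕ) : D ⥤ C := powD F G n ⋙ G

theorem powC_add (F : C ⥤ D) (G : D ⥤ C) (m n : ℕ) :
    powC F G (m + n) = powC F G m ⋙ powC F G n := by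
  induction n with
  | zero =>
      show powC F G m = powC F G m ⋙ 𝟭 C
      rw [Functor.comp_id]
  | succ n ih =>
      show powC F G (m + n) ⋙ (F ⋙ G) = powC F G m ⋙ (powC F G n ⋙ (F ⋙ G))
      rw [ih, Functor.assoc]

theorem powD_add (F : C ⥤ D) (G : D ⥤ C) (m n : ℕ) :
    powD F G (m + n) = powD F G m ⋙ powD F G n := by
  induction n with
  | zero =>
      show powD F G m = powD F G m ⋙ 𝟭 D
      rw [Functor.comp_id]
  | succ n ih =>
      show powD F G (m + n) ⋙ (G ⋙ F) = powD F G m ⋙ (powD F G n ⋙ (G ⋙ F))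
      rw [ih, Functor.assoc]

theorem F_powD (F : C ⥤ D) (G : D ⥤ C) (n : ℕ) :
    F ⋙ powD F G n = powC F G n ⋙ F := by
  induction n with
  | zero =>
      show F ⋙ 𝟭 D = 𝟭 C ⋙ F
      rw [Functor.comp_id, Functor.id_comp]
  | succ n ih =>
      show F ⋙ (powD F G n ⋙ (G ⋙ F)) = (powC F G n ⋙ (F ⋙ G)) ⋙ F
      rw [← Functor.assoc, ih]; rfl

theorem G_powC (F : C ⥤ D) (G : D ⥤ C) (n : ℕ) :
    G ⋙ powC F G n = powD F G n ⋙ G := by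
  induction n with
  | zero =>
      show G ⋙ 𝟭 C = 𝟭 D ⋙ G
      rw [Functor.comp_id, Functor.id_comp]
  | succ n ih =>
      show G ⋙ (powC F G n ⋙ (F ⋙ G)) = (powD F G n ⋙ (G ⋙ F)) ⋙ G
      rw [← Functor.assoc, ih]; rfl

theorem aF_eps_dom (F : C ⥤ D) (G : D ⥤ C) (i j : ℕ) :
    aF F G (i + j + 1) = aF F G j ⋙ (G ⋙ F) ⋙ powD F G i :=
  calc aF F G (i + j + 1) = powC F G (j + 1 + i) ⋙ F := by
        rw [aF, show i + j + 1 = j + 1 + i by omega]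
    _ = (powC F G (j + 1) ⋙ powC F G i) ⋙ F := by rw [powC_add]
    _ = powC F G (j + 1) ⋙ (powC F G i ⋙ F) := rfl
    _ = powC F G (j + 1) ⋙ (F ⋙ powD F G i) := by rw [F_powD]
    _ = aF F G j ⋙ (G ⋙ F) ⋙ powD F G i := rfl

theorem aF_eps_cod (F : C ⥤ D) (G : D ⥤ C) (i j : ℕ) :
    aF F G (i + j) = aF F G j ⋙ 𝟭 D ⋙ powD F G i :=
  calc aF F G (i + j) = powC F G (j + i) ⋙ F := by
        rw [aF, show i + j = j + i by omega]
    _ = (powC F G j ⋙ powC F G i) ⋙ F := by rw [powC_add]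
    _ = powC F G j ⋙ (powC F G i ⋙ F) := rfl
    _ = powC F G j ⋙ (F ⋙ powD F G i) := by rw [F_powD]
    _ = aF F G j ⋙ 𝟭 D ⋙ powD F G i := by rw [Functor.id_comp]; rfl

theorem aF_eta_dom (F : C ⥤ D) (G : D ⥤ C) (i j : ℕ) :
    aF F G (i + j) = powC F G j ⋙ 𝟭 C ⋙ aF F G i :=
  calc aF F G (i + j) = powC F G (j + i) ⋙ F := by
        rw [aF, show i + j = j + i by omega]
    _ = (powC F G j ⋙ powC F G i) ⋙ F := by rw [powC_add]
    _ = powC F G j ⋙ 𝟭 C ⋙ aF F G i := by rw [Functor.id_comp]; rfl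

theorem aF_eta_cod (F : C ⥤ D) (G : D ⥤ C) (i j : ℕ) :
    aF F G (i + j + 1) = powC F G j ⋙ (F ⋙ G) ⋙ aF F G i :=
  calc aF F G (i + j + 1) = powC F G (j + 1 + i) ⋙ F := by
        rw [aF, show i + j + 1 = j + 1 + i by omega]
    _ = (powC F G (j + 1) ⋙ powC F G i) ⋙ F := by rw [powC_add]
    _ = powC F G j ⋙ (F ⋙ G) ⋙ aF F G i := rfl

theorem aG_eps_dom (F : C ⥤ D) (G : D ⥤ C) (i j : ℕ) :
    aG F G (i + j + 1) = powD F G j ⋙ (G ⋙ F) ⋙ aG F G i :=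
  calc aG F G (i + j + 1) = powD F G (j + 1 + i) ⋙ G := by
        rw [aG, show i + j + 1 = j + 1 + i by omega]
    _ = (powD F G (j + 1) ⋙ powD F G i) ⋙ G := by rw [powD_add]
    _ = powD F G j ⋙ (G ⋙ F) ⋙ aG F G i := rfl

theorem aG_eps_cod (F : C ⥤ D) (G : D ⥤ C) (i j : ℕ) :
    aG F G (i + j) = powD F G j ⋙ 𝟭 D ⋙ aG F G i :=
  calc aG F G (i + j) = powD F G (j + i) ⋙ G := by
        rw [aG, show i + j = j + i by omega]
    _ = (powD F G j ⋙ powD F G i) ⋙ G := by rw [powD_add]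
    _ = powD F G j ⋙ 𝟭 D ⋙ aG F G i := by rw [Functor.id_comp]; rfl

theorem aG_eta_dom (F : C ⥤ D) (G : D ⥤ C) (i j : ℕ) :
    aG F G (i + j) = aG F G j ⋙ 𝟭 C ⋙ powC F G i :=
  calc aG F G (i + j) = powD F G (j + i) ⋙ G := by
        rw [aG, show i + j = j + i by omega]
    _ = (powD F G j ⋙ powD F G i) ⋙ G := by rw [powD_add]
    _ = powD F G j ⋙ (powD F G i ⋙ G) := rfl
    _ = powD F G j ⋙ (G ⋙ powC F G i) := by rw [G_powC]
    _ = aG F G j ⋙ 𝟭 C ⋙ powC F G i := by rw [Functor.id_comp]; rfl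

theorem aG_eta_cod (F : C ⥤ D) (G : D ⥤ C) (i j : ℕ) :
    aG F G (i + j + 1) = aG F G j ⋙ (F ⋙ G) ⋙ powC F G i :=
  calc aG F G (i + j + 1) = powD F G (j + 1 + i) ⋙ G := by
        rw [aG, show i + j + 1 = j + 1 + i by omega]
    _ = (powD F G (j + 1) ⋙ powD F G i) ⋙ G := by rw [powD_add]
    _ = powD F G (j + 1) ⋙ (powD F G i ⋙ G) := rfl
    _ = powD F G (j + 1) ⋙ (G ⋙ powC F G i) := by rw [G_powC]
    _ = aG F G j ⋙ (F ⋙ G) ⋙ powC F G i := rfl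

/-- The whiskered rule `(FG)ⁱ ε (F(GF)ʲ) : F(GF)^{i+j+1} ⟶ F(GF)^{i+j}`, with
components `(FG)ⁱ(ε_{F(GF)ʲ A})`. -/
def epsRuleF (F : C ⥤ D) (G : D ⥤ C) (ε : G ⋙ F ⟶ 𝟭 D) (i j : ℕ) :
    aF F G (i + j + 1) ⟶ aF F G (i + j) :=
  eqToHom (aF_eps_dom F G i j) ≫
    Functor.whiskerLeft (aF F G j) (Functor.whiskerRight ε (powD F G i)) ≫
      eqToHom (aF_eps_cod F G i j).symm

/-- The whiskered rule `(F(GF)ⁱ) η (GF)ʲ : F(GF)^{i+j} ⟶ F(GF)^{i+j+1}`, with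
components `F(GF)ⁱ(η_{(GF)ʲ A})`. -/
def etaRuleF (F : C ⥤ D) (G : D ⥤ C) (η : 𝟭 C ⟶ F ⋙ G) (i j : ℕ) :
    aF F G (i + j) ⟶ aF F G (i + j + 1) :=
  eqToHom (aF_eta_dom F G i j) ≫
    Functor.whiskerLeft (powC F G j) (Functor.whiskerRight η (aF F G i)) ≫
      eqToHom (aF_eta_cod F G i j).symm

/-- The whiskered rule `(G(FG)ⁱ) ε (FG)ʲ : G(FG)^{i+j+1} ⟶ G(FG)^{i+j}`, with
components `G(FG)ⁱ(ε_{(FG)ʲ A})`. -/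
def epsRuleG (F : C ⥤ D) (G : D ⥤ C) (ε : G ⋙ F ⟶ 𝟭 D) (i j : ℕ) :
    aG F G (i + j + 1) ⟶ aG F G (i + j) :=
  eqToHom (aG_eps_dom F G i j) ≫
    Functor.whiskerLeft (powD F G j) (Functor.whiskerRight ε (aG F G i)) ≫
      eqToHom (aG_eps_cod F G i j).symm

/-- The whiskered rule `(GF)ⁱ η (G(FG)ʲ) : G(FG)^{i+j} ⟶ G(FG)^{i+j+1}`, with
components `(GF)ⁱ(η_{G(FG)ʲ A})`. -/
def etaRuleG (F : C ⥤ D) (G : D ⥤ C) (η : 𝟭 C ⟶ F ⋙ G) (i j : ℕ) :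
    aG F G (i + j) ⟶ aG F G (i + j + 1) :=
  eqToHom (aG_eta_dom F G i j) ≫
    Functor.whiskerLeft (aG F G j) (Functor.whiskerRight η (powC F G i)) ≫
      eqToHom (aG_eta_cod F G i j).symm

/-- `(η,ε)`-derivations between the alternating composites `F(GF)ⁿ : C ⥤ D`:
the smallest class containing identities and all whiskered copies of `η` and `ε`
(by alternating composites, wherever the types match), closed under vertical
composition. -/
inductive DerivF (F : C ⥤ D) (G : D ⥤ C) (η : 𝟭 C ⟶ F ⋙ G) (ε : G ⋙ F ⟶ 𝟭 D) :
    ∀ {a b : ℕ}, (aF F G a ⟶ aF F G b) → Prop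
  | id (n : ℕ) : DerivF F G η ε (𝟙 (aF F G n))
  | eps_rule (i j : ℕ) : DerivF F G η ε (epsRuleF F G ε i j)
  | eta_rule (i j : ℕ) : DerivF F G η ε (etaRuleF F G η i j)
  | comp {a b c : ℕ} {f : aF F G a ⟶ aF F G b} {g : aF F G b ⟶ aF F G c} :
      DerivF F G η ε f → DerivF F G η ε g → DerivF F G η ε (f ≫ g)

/-- `(η,ε)`-derivations between the alternating composites `G(FG)ⁿ : D ⥤ C`. -/
inductive DerivG (F : C ⥤ D) (G : D ⥤ C) (η : 𝟭 C ⟶ F ⋙ G) (ε : G ⋙ F ⟶ 𝟭 D) :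
    ∀ {a b : ℕ}, (aG F G a ⟶ aG F G b) → Prop
  | id (n : ℕ) : DerivG F G η ε (𝟙 (aG F G n))
  | eps_rule (i j : ℕ) : DerivG F G η ε (epsRuleG F G ε i j)
  | eta_rule (i j : ℕ) : DerivG F G η ε (etaRuleG F G η i j)
  | comp {a b c : ℕ} {f : aG F G a ⟶ aG F G b} {g : aG F G b ⟶ aG F G c} :
      DerivG F G η ε f → DerivG F G η ε g → DerivG F G η ε (f ≫ g)

open Functor

section KozenProof

variable (F : C ⥤ D) (G : D ⥤ C) (η : 𝟭 C ⟶ F ⋙ G) (ε : G ⋙ F ⟶ 𝟭 D)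

/-- Congruence for `whiskerRight` along equalities of the source/target functors. -/
private theorem wr_heq {A : Type*} [Category A] {B : Type*} [Category B] {E : Type*} [Category E]
    {S T S' T' : A ⥤ B} (hS : S = S') (hT : T = T') {φ : S ⟶ T} {ψ : S' ⟶ T'}
    (h : HEq φ ψ) (K : B ⥤ E) : HEq (whiskerRight φ K) (whiskerRight ψ K) := by
  subst hS; subst hT; rw [eq_of_heq h]

/-- canonical derivation `F(GF)ⁿ ⟶ F`, peeling the outermost `FG` pair with `ε`. -/
def canF : ∀ n, aF F G n ⟶ aF F G 0
  | 0 => 𝟙 _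
  | n+1 => (whiskerLeft (aF F G n) ε : aF F G (n+1) ⟶ aF F G n) ≫ canF n

/-- normal-form ε-rule on the `F` side, `i` pairs outside, `j` pairs inside. -/
def epsNF : ∀ i j, aF F G (j+1+i) ⟶ aF F G (j+i)
  | 0, j => (whiskerLeft (aF F G j) ε : aF F G (j+1) ⟶ aF F G j)
  | i+1, j => (whiskerRight (epsNF i j) (G ⋙ F) : aF F G (j+1+i+1) ⟶ aF F G (j+i+1))

/-- normal-form η-rule on the `F` side. -/
def etaNF : ∀ i j, aF F G (j+i) ⟶ aF F G (j+1+i)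
  | 0, j => (whiskerLeft (powC F G j) (whiskerRight η F) : aF F G j ⟶ aF F G (j+1))
  | i+1, j => (whiskerRight (etaNF i j) (G ⋙ F) : aF F G (j+i+1) ⟶ aF F G (j+1+i+1))

private theorem exchF {S T : C ⥤ D} (φ : S ⟶ T) :
    (whiskerRight φ (G ⋙ F) ≫ whiskerLeft T ε : S ⋙ (G ⋙ F) ⟶ T) = whiskerLeft S ε ≫ φ := by
  ext A
  simpa using (ε.naturality (φ.app A))

private theorem K1F : ∀ i j, epsNF F G ε i j ≫ canF F G ε (j+i) = canF F G ε (j+1+i)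
  | 0, j => rfl
  | i+1, j => by
      show whiskerRight (epsNF F G ε i j) (G ⋙ F) ≫
          (whiskerLeft (aF F G (j+i)) ε ≫ canF F G ε (j+i)) = canF F G ε (j+1+i+1)
      rw [← Category.assoc, exchF F G ε (epsNF F G ε i j), Category.assoc, K1F i j]
      rfl

private theorem K2F (tri₂ : whiskerRight η F ≫ whiskerLeft F ε = 𝟙 F) :
    ∀ i j, etaNF F G η i j ≫ canF F G ε (j+1+i) = canF F G ε (j+i)
  | 0, j => by
      show whiskerLeft (powC F G j) (whiskerRight η F) ≫
          (whiskerLeft (aF F G j) ε ≫ canF F G ε j) = canF F G ε j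
      refine Eq.trans (Category.assoc _ _ _).symm ?_
      have h1 : (whiskerLeft (powC F G j) (whiskerRight η F) ≫ whiskerLeft (aF F G j) ε
            : aF F G j ⟶ aF F G j)
          = whiskerLeft (powC F G j) ((whiskerRight η F ≫ whiskerLeft F ε : F ⟶ F)) := by
        ext A; rfl
      erw [h1, tri₂]
      have h2 : (whiskerLeft (powC F G j) (𝟙 F) : aF F G j ⟶ aF F G j) = 𝟙 (aF F G j) := by
        ext A; rfl
      rw [h2]
      exact Category.id_comp _
  | i+1, j => by
      show whiskerRight (etaNF F G η i j) (G ⋙ F) ≫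
          (whiskerLeft (aF F G (j+1+i)) ε ≫ canF F G ε (j+1+i)) = canF F G ε (j+i+1)
      rw [← Category.assoc, exchF F G ε (etaNF F G η i j), Category.assoc,
        K2F tri₂ i j]
      rfl

end KozenProof
section KozenProofG

variable (F : C ⥤ D) (G : D ⥤ C) (η : 𝟭 C ⟶ F ⋙ G) (ε : G ⋙ F ⟶ 𝟭 D)

/-- canonical derivation `G(FG)ⁿ ⟶ G`, peeling the leftmost `FG` pair with `ε` (under one `G`). -/
def canG : ∀ n, aG F G n ⟶ aG F G 0
  | 0 => 𝟙 _
  | n+1 => (whiskerRight (whiskerLeft (powD F G n) ε) G : aG F G (n+1) ⟶ aG F G n) ≫ canG n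

/-- `D`-side normal-form ε-rule, `i` pairs outside, `j` pairs inside. -/
def epsND : ∀ i j, powD F G (j+1+i) ⟶ powD F G (j+i)
  | 0, j => (whiskerLeft (powD F G j) ε : powD F G (j+1) ⟶ powD F G j)
  | i+1, j => (whiskerRight (whiskerRight (epsND i j) G) F :
      powD F G (j+1+i+1) ⟶ powD F G (j+i+1))

/-- `D`-side normal-form η-rule (η under at least one `G`). -/
def etaND : ∀ i j, powD F G (j+i+1) ⟶ powD F G (j+1+i+1)
  | 0, j => (whiskerRight (whiskerLeft (aG F G j) η) F : powD F G (j+1) ⟶ powD F G (j+2))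
  | i+1, j => (whiskerRight (whiskerRight (etaND i j) G) F :
      powD F G (j+i+2) ⟶ powD F G (j+1+i+2))

/-- normal-form ε-rule on the `G` side. -/
def epsNG (i j : ℕ) : aG F G (j+1+i) ⟶ aG F G (j+i) := whiskerRight (epsND F G ε i j) G

/-- normal-form η-rule on the `G` side. -/
def etaNG : ∀ i j, aG F G (j+i) ⟶ aG F G (j+1+i)
  | 0, j => (whiskerLeft (aG F G j) η : aG F G j ⟶ aG F G (j+1))
  | i+1, j => (whiskerRight (etaND F G η i j) G : aG F G (j+i+1) ⟶ aG F G (j+1+i+1))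

private theorem exchD {U V : D ⥤ D} (χ : U ⟶ V) :
    (whiskerRight (whiskerRight (whiskerRight χ G) F) G ≫
        whiskerRight (whiskerLeft V ε) G : (U ⋙ (G ⋙ F)) ⋙ G ⟶ V ⋙ G)
      = whiskerRight (whiskerLeft U ε) G ≫ whiskerRight χ G := by
  ext B
  have := ε.naturality (χ.app B)
  simp only [NatTrans.comp_app, Functor.comp_obj, whiskerRight_app, whiskerLeft_app,
    Functor.comp_map]
  rw [← G.map_comp, ← G.map_comp]
  congr 1


private theorem K1G : ∀ i j, epsNG F G ε i j ≫ canG F G ε (j+i) = canG F G ε (j+1+i)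
  | 0, j => rfl
  | i+1, j => by
      show whiskerRight (whiskerRight (whiskerRight (epsND F G ε i j) G) F) G ≫
          (whiskerRight (whiskerLeft (powD F G (j+i)) ε) G ≫ canG F G ε (j+i))
          = canG F G ε (j+1+i+1)
      refine Eq.trans (Category.assoc _ _ _).symm ?_
      erw [exchD F G ε (epsND F G ε i j), Category.assoc]
      show whiskerRight (whiskerLeft (powD F G (j+1+i)) ε) G ≫
          (epsNG F G ε i j ≫ canG F G ε (j+i)) = canG F G ε (j+1+i+1)
      erw [K1G i j]
      rfl

private theorem K2G (tri₁ : whiskerLeft G η ≫ whiskerRight ε G = 𝟙 G)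
    (tri₂ : whiskerRight η F ≫ whiskerLeft F ε = 𝟙 F) :
    ∀ i j, etaNG F G η i j ≫ canG F G ε (j+1+i) = canG F G ε (j+i)
  | 0, j => by
      show whiskerLeft (aG F G j) η ≫
          (whiskerRight (whiskerLeft (powD F G j) ε) G ≫ canG F G ε j) = canG F G ε j
      refine Eq.trans (Category.assoc _ _ _).symm ?_
      have h1 : (whiskerLeft (aG F G j) η ≫ whiskerRight (whiskerLeft (powD F G j) ε) G
            : aG F G j ⟶ aG F G j)
          = whiskerLeft (powD F G j) ((whiskerLeft G η ≫ whiskerRight ε G : G ⟶ G)) := by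
        ext B; rfl
      erw [h1, tri₁]
      have h2 : (whiskerLeft (powD F G j) (𝟙 G) : aG F G j ⟶ aG F G j) = 𝟙 (aG F G j) := by
        ext B; rfl
      rw [h2]
      exact Category.id_comp _
  | 1, j => by
      show whiskerRight (whiskerRight (whiskerLeft (aG F G j) η) F) G ≫
          (whiskerRight (whiskerLeft (powD F G (j+1)) ε) G ≫ canG F G ε (j+1))
          = canG F G ε (j+1)
      refine Eq.trans (Category.assoc _ _ _).symm ?_
      have h1 : (whiskerRight (whiskerRight (whiskerLeft (aG F G j) η) F) G ≫
            whiskerRight (whiskerLeft (powD F G (j+1)) ε) G : aG F G (j+1) ⟶ aG F G (j+1))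
          = whiskerRight (whiskerLeft (aG F G j)
              ((whiskerRight η F ≫ whiskerLeft F ε : F ⟶ F))) G := by
        ext B
        simp only [whiskerRight_app, whiskerLeft_app, NatTrans.comp_app]
        refine (G.map_comp _ _).symm.trans ?_
        rfl
      erw [h1, tri₂]
      have h2 : (whiskerRight (whiskerLeft (aG F G j) (𝟙 F)) G
            : aG F G (j+1) ⟶ aG F G (j+1)) = 𝟙 (aG F G (j+1)) := by
        ext B
        simp only [whiskerRight_app, whiskerLeft_app, NatTrans.id_app]
        exact G.map_id _
      rw [h2]
      exact Category.id_comp _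
  | (i+2), j => by
      show whiskerRight (whiskerRight (whiskerRight (etaND F G η i j) G) F) G ≫
          (whiskerRight (whiskerLeft (powD F G (j+1+i+1)) ε) G ≫ canG F G ε (j+1+i+1))
          = canG F G ε (j+i+2)
      refine Eq.trans (Category.assoc _ _ _).symm ?_
      erw [exchD F G ε (etaND F G η i j), Category.assoc]
      show whiskerRight (whiskerLeft (powD F G (j+i+1)) ε) G ≫
          (etaNG F G η (i+1) j ≫ canG F G ε (j+1+(i+1))) = canG F G ε (j+i+2)
      erw [K2G tri₁ tri₂ (i+1) j]
      rfl

end KozenProofG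
section KozenHeq

variable (F : C ⥤ D) (G : D ⥤ C) (η : 𝟭 C ⟶ F ⋙ G) (ε : G ⋙ F ⟶ 𝟭 D)

private theorem aF_shift : ∀ (i m : ℕ), aF F G (m+i) = aF F G m ⋙ powD F G i
  | 0, m => (Functor.comp_id (aF F G m)).symm
  | i+1, m => by
      show aF F G (m+i) ⋙ (G ⋙ F) = aF F G m ⋙ (powD F G i ⋙ (G ⋙ F))
      rw [aF_shift i m]
      exact Functor.assoc _ _ _

private theorem aF_shiftC (i m : ℕ) : powC F G m ⋙ aF F G i = aF F G (m+i) := by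
  show powC F G m ⋙ (powC F G i ⋙ F) = powC F G (m+i) ⋙ F
  rw [powC_add]
  exact (Functor.assoc _ _ _).symm

private theorem powD_shift (i m : ℕ) : powD F G m ⋙ powD F G i = powD F G (m+i) :=
  (powD_add F G m i).symm

private theorem aGQF (i m : ℕ) : (aG F G m ⋙ powC F G i) ⋙ F = powD F G (m+i) ⋙ (G ⋙ F) := by
  show powD F G m ⋙ ((G ⋙ powC F G i) ⋙ F) = powD F G (m+i) ⋙ (G ⋙ F)
  rw [G_powC, powD_add]
  rfl

private theorem epsRuleF_heq : ∀ i j, HEq (epsRuleF F G ε i j) (epsNF F G ε i j)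
  | 0, j => by
      have s : HEq (epsRuleF F G ε 0 j)
          (whiskerLeft (aF F G j) (whiskerRight ε (powD F G 0))) :=
        (conj_eqToHom_iff_heq _ _ (aF_eps_dom F G 0 j) (aF_eps_cod F G 0 j)).mp rfl
      exact s.trans HEq.rfl
  | i+1, j => by
      have s : HEq (epsRuleF F G ε (i+1) j)
          (whiskerLeft (aF F G j) (whiskerRight ε (powD F G (i+1)))) :=
        (conj_eqToHom_iff_heq _ _ (aF_eps_dom F G (i+1) j) (aF_eps_cod F G (i+1) j)).mp rfl
      have s' : HEq (whiskerLeft (aF F G j) (whiskerRight ε (powD F G i))) (epsNF F G ε i j) :=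
        (((conj_eqToHom_iff_heq _ _ (aF_eps_dom F G i j) (aF_eps_cod F G i j)).mp rfl).symm).trans
          (epsRuleF_heq i j)
      have w : HEq (whiskerRight (whiskerLeft (aF F G j) (whiskerRight ε (powD F G i))) (G ⋙ F))
          (whiskerRight (epsNF F G ε i j) (G ⋙ F)) :=
        wr_heq ((aF_shift F G i (j+1)).symm) ((aF_shift F G i j).symm) s' (G ⋙ F)
      exact s.trans (HEq.trans HEq.rfl w)

private theorem etaRuleF_heq : ∀ i j, HEq (etaRuleF F G η i j) (etaNF F G η i j)
  | 0, j => by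
      have s : HEq (etaRuleF F G η 0 j)
          (whiskerLeft (powC F G j) (whiskerRight η (aF F G 0))) :=
        (conj_eqToHom_iff_heq _ _ (aF_eta_dom F G 0 j) (aF_eta_cod F G 0 j)).mp rfl
      exact s.trans HEq.rfl
  | i+1, j => by
      have s : HEq (etaRuleF F G η (i+1) j)
          (whiskerLeft (powC F G j) (whiskerRight η (aF F G (i+1)))) :=
        (conj_eqToHom_iff_heq _ _ (aF_eta_dom F G (i+1) j) (aF_eta_cod F G (i+1) j)).mp rfl
      have s' : HEq (whiskerLeft (powC F G j) (whiskerRight η (aF F G i))) (etaNF F G η i j) :=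
        (((conj_eqToHom_iff_heq _ _ (aF_eta_dom F G i j) (aF_eta_cod F G i j)).mp rfl).symm).trans
          (etaRuleF_heq i j)
      have w : HEq (whiskerRight (whiskerLeft (powC F G j) (whiskerRight η (aF F G i))) (G ⋙ F))
          (whiskerRight (etaNF F G η i j) (G ⋙ F)) :=
        wr_heq (aF_shiftC F G i j) (aF_shiftC F G i (j+1)) s' (G ⋙ F)
      exact s.trans (HEq.trans HEq.rfl w)

private theorem LDeps : ∀ i j, HEq (whiskerLeft (powD F G j) (whiskerRight ε (powD F G i)))
    (epsND F G ε i j)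
  | 0, j => HEq.rfl
  | i+1, j => by
      have w1 : HEq (whiskerRight (whiskerLeft (powD F G j) (whiskerRight ε (powD F G i))) G)
          (whiskerRight (epsND F G ε i j) G) :=
        wr_heq ((powD_shift F G i (j+1))) ((powD_shift F G i j)) (LDeps i j) G
      have w2 : HEq (whiskerRight (whiskerRight
            (whiskerLeft (powD F G j) (whiskerRight ε (powD F G i))) G) F)
          (whiskerRight (whiskerRight (epsND F G ε i j) G) F) :=
        wr_heq (congrArg (· ⋙ G) (powD_shift F G i (j+1)))
          (congrArg (· ⋙ G) (powD_shift F G i j)) w1 F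
      exact HEq.trans HEq.rfl w2

private theorem LDeta : ∀ i j,
    HEq (whiskerRight (whiskerLeft (aG F G j) (whiskerRight η (powC F G i))) F)
      (etaND F G η i j)
  | 0, j => HEq.rfl
  | i+1, j => by
      have w1 : HEq (whiskerRight (whiskerRight
            (whiskerLeft (aG F G j) (whiskerRight η (powC F G i))) F) G)
          (whiskerRight (etaND F G η i j) G) :=
        wr_heq (aGQF F G i j) (aGQF F G i (j+1)) (LDeta i j) G
      have w2 : HEq (whiskerRight (whiskerRight (whiskerRight
            (whiskerLeft (aG F G j) (whiskerRight η (powC F G i))) F) G) F)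
          (whiskerRight (whiskerRight (etaND F G η i j) G) F) :=
        wr_heq (congrArg (· ⋙ G) (aGQF F G i j)) (congrArg (· ⋙ G) (aGQF F G i (j+1))) w1 F
      exact HEq.trans HEq.rfl w2

private theorem epsRuleG_heq (i j : ℕ) : HEq (epsRuleG F G ε i j) (epsNG F G ε i j) := by
  have s : HEq (epsRuleG F G ε i j)
      (whiskerLeft (powD F G j) (whiskerRight ε (aG F G i))) :=
    (conj_eqToHom_iff_heq _ _ (aG_eps_dom F G i j) (aG_eps_cod F G i j)).mp rfl
  have w : HEq (whiskerRight (whiskerLeft (powD F G j) (whiskerRight ε (powD F G i))) G)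
      (whiskerRight (epsND F G ε i j) G) :=
    wr_heq (powD_shift F G i (j+1)) (powD_shift F G i j) (LDeps F G ε i j) G
  exact s.trans (HEq.trans HEq.rfl w)

private theorem etaRuleG_heq : ∀ i j, HEq (etaRuleG F G η i j) (etaNG F G η i j)
  | 0, j => by
      have s : HEq (etaRuleG F G η 0 j)
          (whiskerLeft (aG F G j) (whiskerRight η (powC F G 0))) :=
        (conj_eqToHom_iff_heq _ _ (aG_eta_dom F G 0 j) (aG_eta_cod F G 0 j)).mp rfl
      exact s.trans HEq.rfl
  | i+1, j => by
      have s : HEq (etaRuleG F G η (i+1) j)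
          (whiskerLeft (aG F G j) (whiskerRight η (powC F G (i+1)))) :=
        (conj_eqToHom_iff_heq _ _ (aG_eta_dom F G (i+1) j) (aG_eta_cod F G (i+1) j)).mp rfl
      have w : HEq (whiskerRight (whiskerRight
            (whiskerLeft (aG F G j) (whiskerRight η (powC F G i))) F) G)
          (whiskerRight (etaND F G η i j) G) :=
        wr_heq (aGQF F G i j) (aGQF F G i (j+1)) (LDeta F G η i j) G
      exact s.trans (HEq.trans HEq.rfl w)

end KozenHeq
section KozenMain

variable (F : C ⥤ D) (G : D ⥤ C) (η : 𝟭 C ⟶ F ⋙ G) (ε : G ⋙ F ⟶ 𝟭 D)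

private theorem derivF_cast {a b a' b' : ℕ} (ha : a = a') (hb : b = b')
    {f : aF F G a ⟶ aF F G b} {g : aF F G a' ⟶ aF F G b'} (h : HEq f g)
    (hf : DerivF F G η ε f) : DerivF F G η ε g := by
  subst ha; subst hb; exact (eq_of_heq h) ▸ hf

private theorem derivG_cast {a b a' b' : ℕ} (ha : a = a') (hb : b = b')
    {f : aG F G a ⟶ aG F G b} {g : aG F G a' ⟶ aG F G b'} (h : HEq f g)
    (hf : DerivG F G η ε f) : DerivG F G η ε g := by
  subst ha; subst hb; exact (eq_of_heq h) ▸ hf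

private theorem canF_deriv : ∀ n, DerivF F G η ε (canF F G ε n)
  | 0 => DerivF.id 0
  | n+1 => DerivF.comp
      (derivF_cast F G η ε (by omega : 0+n+1 = n+1) (by omega : 0+n = n)
        (epsRuleF_heq F G ε 0 n) (DerivF.eps_rule 0 n))
      (canF_deriv n)

private theorem canG_deriv : ∀ n, DerivG F G η ε (canG F G ε n)
  | 0 => DerivG.id 0
  | n+1 => DerivG.comp
      (derivG_cast F G η ε (by omega : 0+n+1 = n+1) (by omega : 0+n = n)
        (epsRuleG_heq F G ε 0 n) (DerivG.eps_rule 0 n))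
      (canG_deriv n)

private theorem can_castF {a b a' b' : ℕ} (ha : a = a') (hb : b = b')
    {f : aF F G a ⟶ aF F G b} {g : aF F G a' ⟶ aF F G b'} (h : HEq f g)
    (hg : g ≫ canF F G ε b' = canF F G ε a') : f ≫ canF F G ε b = canF F G ε a := by
  subst ha; subst hb; rw [eq_of_heq h]; exact hg

private theorem can_castG {a b a' b' : ℕ} (ha : a = a') (hb : b = b')
    {f : aG F G a ⟶ aG F G b} {g : aG F G a' ⟶ aG F G b'} (h : HEq f g)
    (hg : g ≫ canG F G ε b' = canG F G ε a') : f ≫ canG F G ε b = canG F G ε a := by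
  subst ha; subst hb; rw [eq_of_heq h]; exact hg

private theorem invF (tri₂ : whiskerRight η F ≫ whiskerLeft F ε = 𝟙 F)
    {a b : ℕ} {f : aF F G a ⟶ aF F G b} (hf : DerivF F G η ε f) :
    f ≫ canF F G ε b = canF F G ε a := by
  induction hf with
  | id n => exact Category.id_comp _
  | eps_rule i j =>
      exact can_castF F G ε (by omega : i+j+1 = j+1+i) (by omega : i+j = j+i)
        (epsRuleF_heq F G ε i j) (K1F F G ε i j)
  | eta_rule i j =>
      exact can_castF F G ε (by omega : i+j = j+i) (by omega : i+j+1 = j+1+i)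
        (etaRuleF_heq F G η i j) (K2F F G η ε tri₂ i j)
  | comp h1 h2 ih1 ih2 => rw [Category.assoc, ih2, ih1]

private theorem invG (tri₁ : whiskerLeft G η ≫ whiskerRight ε G = 𝟙 G)
    (tri₂ : whiskerRight η F ≫ whiskerLeft F ε = 𝟙 F)
    {a b : ℕ} {f : aG F G a ⟶ aG F G b} (hf : DerivG F G η ε f) :
    f ≫ canG F G ε b = canG F G ε a := by
  induction hf with
  | id n => exact Category.id_comp _
  | eps_rule i j =>
      exact can_castG F G ε (by omega : i+j+1 = j+1+i) (by omega : i+j = j+i)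
        (epsRuleG_heq F G ε i j) (K1G F G ε i j)
  | eta_rule i j =>
      exact can_castG F G ε (by omega : i+j = j+i) (by omega : i+j+1 = j+1+i)
        (etaRuleG_heq F G η i j) (K2G F G η ε tri₁ tri₂ i j)
  | comp h1 h2 ih1 ih2 => rw [Category.assoc, ih2, ih1]

end KozenMain
/-- **Theorem 4.6 of Kozen, "Natural Transformations as Rewrite Rules and Monad
Composition"** (characterization of adjunctions by rewrite categories).

Let `F : C ⥤ D`, `G : D ⥤ C` be functors and `η : 𝟭_C ⟶ GF` (Mathlib: `F ⋙ G`),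
`ε : FG ⟶ 𝟭_D` (Mathlib: `G ⋙ F`) natural transformations.  The following are
equivalent:

1. `η` and `ε` satisfy the triangle identities `Gε ∘ᵥ ηG = id_G` and
   `εF ∘ᵥ Fη = id_F` (so `F ⊣ G` with unit `η` and counit `ε`); here
   `ηG = whiskerLeft G η`, `Gε = whiskerRight ε G`, `Fη = whiskerRight η F`,
   `εF = whiskerLeft F ε`, and `∘ᵥ` is `≫` read backwards;
2. `F` is terminal in the rewrite category on the alternating words `F(GF)ⁿ`, and
   `G` is terminal in the rewrite category on the alternating words `G(FG)ⁿ`: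
   for every `n ≥ 0` there is an `(η,ε)`-derivation `F(GF)ⁿ ⟶ F` and any two such
   derivations are equal, and likewise for `G(FG)ⁿ ⟶ G`. -/
theorem adjunction_iff_terminal
    (F : C ⥤ D) (G : D ⥤ C) (η : 𝟭 C ⟶ F ⋙ G) (ε : G ⋙ F ⟶ 𝟭 D) :
    (Functor.whiskerLeft G η ≫ Functor.whiskerRight ε G = 𝟙 G ∧
      Functor.whiskerRight η F ≫ Functor.whiskerLeft F ε = 𝟙 F)
      ↔
    ((∀ n : ℕ, ∃ f : aF F G n ⟶ aF F G 0, DerivF F G η ε f) ∧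
      (∀ n : ℕ, ∀ f g : aF F G n ⟶ aF F G 0,
        DerivF F G η ε f → DerivF F G η ε g → f = g) ∧
      (∀ n : ℕ, ∃ f : aG F G n ⟶ aG F G 0, DerivG F G η ε f) ∧
      (∀ n : ℕ, ∀ f g : aG F G n ⟶ aG F G 0,
        DerivG F G η ε f → DerivG F G η ε g → f = g)) := by
  constructor
  · rintro ⟨tri₁, tri₂⟩
    refine ⟨fun n => ⟨canF F G ε n, canF_deriv F G η ε n⟩, ?_,
      fun n => ⟨canG F G ε n, canG_deriv F G η ε n⟩, ?_⟩
    · intro n f g hf hg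
      have h1 := invF F G η ε tri₂ hf
      have h2 := invF F G η ε tri₂ hg
      rw [show canF F G ε 0 = 𝟙 (aF F G 0) from rfl, Category.comp_id] at h1 h2
      rw [h1, h2]
    · intro n f g hf hg
      have h1 := invG F G η ε tri₁ tri₂ hf
      have h2 := invG F G η ε tri₁ tri₂ hg
      rw [show canG F G ε 0 = 𝟙 (aG F G 0) from rfl, Category.comp_id] at h1 h2
      rw [h1, h2]
  · rintro ⟨-, uF, -, uG⟩
    constructor
    · have hd : DerivG F G η ε (etaRuleG F G η 0 0 ≫ epsRuleG F G ε 0 0) :=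
        DerivG.comp (DerivG.eta_rule 0 0) (DerivG.eps_rule 0 0)
      have h := uG 0 _ _ hd (DerivG.id 0)
      have e1 : etaRuleG F G η 0 0 = whiskerLeft G η :=
        eq_of_heq ((etaRuleG_heq F G η 0 0).trans HEq.rfl)
      have e2 : epsRuleG F G ε 0 0 = whiskerRight ε G :=
        eq_of_heq ((epsRuleG_heq F G ε 0 0).trans HEq.rfl)
      have : whiskerLeft G η ≫ whiskerRight ε G = 𝟙 (aG F G 0) := by
        rw [← e1, ← e2]; exact h
      exact this
    · have hd : DerivF F G η ε (etaRuleF F G η 0 0 ≫ epsRuleF F G ε 0 0) :=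
        DerivF.comp (DerivF.eta_rule 0 0) (DerivF.eps_rule 0 0)
      have h := uF 0 _ _ hd (DerivF.id 0)
      have e1 : etaRuleF F G η 0 0 = whiskerRight η F :=
        eq_of_heq ((etaRuleF_heq F G η 0 0).trans HEq.rfl)
      have e2 : epsRuleF F G ε 0 0 = whiskerLeft F ε :=
        eq_of_heq ((epsRuleF_heq F G ε 0 0).trans HEq.rfl)
      have : whiskerRight η F ≫ whiskerLeft F ε = 𝟙 (aF F G 0) := by
        rw [← e1, ← e2]; exact h
      exact this

end AdjRewrite
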